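/- Let λ > 0 and P ∈ ℝ, and let ψ be a strictly positive classical solution of the homogeneous Euler ODE with parameters (λ, P) on an open interval I. Then the Bernoulli function B(θ) = (2P + λ²ψ(θ)² + ψ′(θ)²) ψ(θ)^{2/λ − 2} is constant on I. -/

import Mathlib

open Real Set

/-- For a strictly positive classical solution `ψ` of the homogeneous Euler ODE
on an open interval, the Bernoulli function `B(θ) = (2P + λ²ψ² + ψ'²) ψ^{2/λ - 2}` is constant. -/
theorem bernoulli_constant
    (lam P : ℝ) (hlam : 0 < lam)
    (a b : ℝ) (ψ ψ' ψ'' : ℝ → ℝ)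
    (hpos : ∀ θ ∈ Set.Ioo a b, 0 < ψ θ)
    (hd1 : ∀ θ ∈ Set.Ioo a b, HasDerivAt ψ (ψ' θ) θ)
    (hd2 : ∀ θ ∈ Set.Ioo a b, HasDerivAt ψ' (ψ'' θ) θ)
    (hode : ∀ θ ∈ Set.Ioo a b, 2 * (lam - 1) * P =
      -(lam - 1) * (ψ' θ) ^ 2 + lam ^ 2 * (ψ θ) ^ 2 + lam * (ψ'' θ) * (ψ θ)) :
    ∀ θ₁ ∈ Set.Ioo a b, ∀ θ₂ ∈ Set.Ioo a b,
      (2 * P + lam ^ 2 * (ψ θ₁) ^ 2 + (ψ' θ₁) ^ 2) * (ψ θ₁) ^ (2 / lam - 2) =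
      (2 * P + lam ^ 2 * (ψ θ₂) ^ 2 + (ψ' θ₂) ^ 2) * (ψ θ₂) ^ (2 / lam - 2) := by
  set e : ℝ := 2 / lam - 2 with he
  set B : ℝ → ℝ := fun θ => (2 * P + lam ^ 2 * (ψ θ) ^ 2 + (ψ' θ) ^ 2) * (ψ θ) ^ e with hB
  have key : ∀ θ ∈ Set.Ioo a b, HasDerivAt B 0 θ := by
    intro θ hθ
    have hψpos := hpos θ hθ
    have hψne : ψ θ ≠ 0 := ne_of_gt hψpos
    have h1 := hd1 θ hθ
    have h2 := hd2 θ hθ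
    have hfront : HasDerivAt (fun θ => 2 * P + lam ^ 2 * (ψ θ) ^ 2 + (ψ' θ) ^ 2)
        (lam ^ 2 * (2 * ψ θ * ψ' θ) + 2 * ψ' θ * ψ'' θ) θ := by
      have := ((h1.pow 2).const_mul (lam ^ 2)).const_add (2 * P)
      have := this.add (h2.pow 2)
      refine this.congr_deriv ?_
      norm_num
    have hpow : HasDerivAt (fun θ => (ψ θ) ^ e)
        (ψ' θ * e * (ψ θ) ^ (e - 1)) θ :=
      h1.rpow_const (Or.inl hψne)
    have hprod := hfront.mul hpow
    have hode' := hode θ hθ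
    have hfac : (ψ θ) ^ e = (ψ θ) ^ (e - 1) * ψ θ := by
      rw [← Real.rpow_add_one hψne (e - 1)]; ring_nf
    have hlam' : lam ≠ 0 := ne_of_gt hlam
    have hb : (lam ^ 2 * (2 * ψ θ * ψ' θ) + 2 * ψ' θ * ψ'' θ) * ψ θ +
        (2 * P + lam ^ 2 * (ψ θ) ^ 2 + (ψ' θ) ^ 2) * (e * ψ' θ) = 0 := by
      rw [he]
      field_simp
      linear_combination (-2 * ψ' θ) * hode'
    have hder0 :
        (lam ^ 2 * (2 * ψ θ * ψ' θ) + 2 * ψ' θ * ψ'' θ) * (ψ θ) ^ e +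
          (2 * P + lam ^ 2 * (ψ θ) ^ 2 + (ψ' θ) ^ 2) * (ψ' θ * e * (ψ θ) ^ (e - 1)) = 0 := by
      rw [hfac]
      linear_combination ((ψ θ) ^ (e - 1)) * hb
    have := hprod
    rw [hder0] at this
    exact this
  intro θ₁ hθ₁ θ₂ hθ₂
  have hconv : Convex ℝ (Set.Ioo a b) := convex_Ioo a b
  have hdiff : DifferentiableOn ℝ B (Set.Ioo a b) :=
    fun x hx => ((key x hx).differentiableAt).differentiableWithinAt
  have hfd : ∀ x ∈ Set.Ioo a b, fderivWithin ℝ B (Set.Ioo a b) x = 0 := by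
    intro x hx
    have : fderivWithin ℝ B (Set.Ioo a b) x = fderiv ℝ B x :=
      fderivWithin_of_isOpen isOpen_Ioo hx
    rw [this, ((key x hx).hasFDerivAt).fderiv]
    ext
    simp
  exact hconv.is_const_of_fderivWithin_eq_zero hdiff hfd hθ₁ hθ₂
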